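/- arXiv:2508.18599 — 3 statements merged into one kernel-verified Lean document; each statement's English description precedes it below -/
import Mathlib

section
/- The function f(t) = ∑_{j=1}^n w_j e^{-i t E_j} with w_j ≥ 0, ∑ w_j = 1, and E_j ∈ ℝ is almost periodic in the sense that for every ε > 0 the set of t with |f(t) − 1| < ε is unbounded above. -/
open Complex Finset

lemma aux_norm_exp_mul_I (r : ℝ) : ‖Complex.exp (-(r : ℂ) * Complex.I)‖ = 1 := by
  have h : (-(r:ℂ)) * Complex.I = ((-r : ℝ) : ℂ) * Complex.I := by push_cast; ring
  rw [h, Complex.norm_exp_ofReal_mul_I]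

lemma aux_strictMono_add (φ : ℕ → ℕ) (h : StrictMono φ) (a c : ℕ) :
    φ a + c ≤ φ (a + c) := by
  induction c with
  | zero => simp
  | succ c ih =>
      have h2 : φ (a + c) < φ (a + (c + 1)) := h (by omega)
      omega

/-- The trigonometric polynomial `f(t) = ∑_j w_j e^{-itE_j}` with
`w_j ≥ 0`, `∑ w_j = 1` is almost periodic: for every `ε > 0` the set of `t` with
`|f(t) − 1| < ε` is unbounded above. -/
theorem trig_poly_almost_periodic
    (n : ℕ) (E : Fin n → ℝ) (w : Fin n → ℝ)
    (hw : ∀ j, 0 ≤ w j) (hsum : ∑ j, w j = 1)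
    (ε : ℝ) (hε : 0 < ε) (m : ℝ) :
    ∃ t : ℝ, m < t ∧
      ‖(∑ j, (w j : ℂ) * Complex.exp (-(t * E j) * Complex.I)) - 1‖ < ε := by
  set δ := ε / 4 with hδdef
  have hδ : 0 < δ := by positivity
  set x : ℕ → (Fin n → ℂ) := fun k j =>
    Complex.exp (-(((k : ℝ) * E j : ℝ) : ℂ) * Complex.I) with hxdef
  have hmem : ∀ k, x k ∈ Metric.closedBall (0 : Fin n → ℂ) 1 := by
    intro k
    rw [Metric.mem_closedBall, dist_zero_right, pi_norm_le_iff_of_nonneg zero_le_one]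
    intro j
    exact le_of_eq (aux_norm_exp_mul_I ((k : ℝ) * E j))
  obtain ⟨L, _, φ, hφ, hconv⟩ :=
    (isCompact_closedBall (0 : Fin n → ℂ) 1).tendsto_subseq hmem
  obtain ⟨N, hN⟩ := Metric.tendsto_atTop.mp hconv δ hδ
  set c : ℕ := ⌈m⌉₊ + 1 with hc
  set a : ℕ := φ (N + c) with ha
  set b : ℕ := φ N with hb
  have hab : b + c ≤ a := aux_strictMono_add φ hφ N c
  set k : ℕ := a - b with hk
  refine ⟨(k : ℝ), ?_, ?_⟩
  · have h1 : m ≤ (⌈m⌉₊ : ℝ) := Nat.le_ceil m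
    have h2 : c ≤ k := by omega
    have : (c : ℝ) ≤ (k : ℝ) := by exact_mod_cast h2
    have hcm : m < (c : ℝ) := by
      have : ((⌈m⌉₊ : ℝ)) < (c : ℝ) := by exact_mod_cast Nat.lt_succ_self _
      linarith
    linarith
  · -- coordinatewise bound
    have hcoord : ∀ j, ‖Complex.exp (-(((k : ℝ) : ℂ) * (E j : ℂ)) * Complex.I) - 1‖ ≤ 2 * δ := by
      intro j
      have hd1 : dist (x a) L < δ := hN (N + c) (Nat.le_add_right _ _)
      have hd2 : dist (x b) L < δ := hN N le_rfl
      have hdist : dist (x a j) (x b j) ≤ dist (x a) (x b) := dist_le_pi_dist (x a) (x b) j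
      have hxab : dist (x a j) (x b j) < 2 * δ := by
        have := dist_triangle (x a) L (x b)
        have h' : dist L (x b) = dist (x b) L := dist_comm _ _
        linarith [hdist]
      -- relate to exp difference
      have hkey : (Complex.exp (-(((k : ℝ) : ℂ) * (E j : ℂ)) * Complex.I) - 1) *
          Complex.exp (-(((b : ℝ) * E j : ℝ) : ℂ) * Complex.I) = x a j - x b j := by
        have hba : (k : ℝ) + (b : ℝ) = (a : ℝ) := by
          have : k + b = a := by omega
          exact_mod_cast this
        have hba' : ((k : ℕ) : ℂ) + ((b : ℕ) : ℂ) = ((a : ℕ) : ℂ) := by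
          exact_mod_cast hba
        simp only [hxdef, sub_mul, one_mul, ← Complex.exp_add]
        congr 1
        refine congrArg Complex.exp ?_
        push_cast
        linear_combination (-(E j : ℂ) * Complex.I) * hba'
      have hnorm : ‖Complex.exp (-(((k : ℝ) : ℂ) * (E j : ℂ)) * Complex.I) - 1‖ =
          ‖x a j - x b j‖ := by
        rw [← hkey, norm_mul]
        have h1 : ((((b : ℝ) * E j : ℝ) : ℂ)) = (((b : ℝ) * E j : ℝ) : ℂ) := rfl
        rw [aux_norm_exp_mul_I ((b : ℝ) * E j), mul_one]
      rw [hnorm]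
      calc ‖x a j - x b j‖ = dist (x a j) (x b j) := (dist_eq_norm _ _).symm
        _ ≤ 2 * δ := hxab.le
    -- sum bound
    have h1 : (∑ j, (w j : ℂ)) = 1 := by exact_mod_cast hsum
    have hrw : (∑ j, (w j : ℂ) * Complex.exp (-(((k : ℝ) : ℂ) * (E j : ℂ)) * Complex.I)) - 1
        = ∑ j, (w j : ℂ) * (Complex.exp (-(((k : ℝ) : ℂ) * (E j : ℂ)) * Complex.I) - 1) := by
      simp only [mul_sub, mul_one, Finset.sum_sub_distrib, h1]
    have hgoal : ‖(∑ j, (w j : ℂ) * Complex.exp (-(((k : ℝ) : ℂ) * (E j : ℂ)) * Complex.I)) - 1‖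
        < ε := by
      rw [hrw]
      calc ‖∑ j, (w j : ℂ) * (Complex.exp (-(((k : ℝ) : ℂ) * (E j : ℂ)) * Complex.I) - 1)‖
          ≤ ∑ j, ‖(w j : ℂ) * (Complex.exp (-(((k : ℝ) : ℂ) * (E j : ℂ)) * Complex.I) - 1)‖ :=
            norm_sum_le _ _
        _ ≤ ∑ j, w j * (2 * δ) := by
            apply Finset.sum_le_sum
            intro j _
            rw [norm_mul, Complex.norm_real, Real.norm_of_nonneg (hw j)]
            exact mul_le_mul_of_nonneg_left (hcoord j) (hw j)
        _ = 2 * δ := by rw [← Finset.sum_mul, hsum, one_mul]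
        _ < ε := by rw [hδdef]; linarith
    exact hgoal
end

section
/- Let A and C = A + B be bounded operators on a Banach space X with B bounded. Then e^{tC} = ∑_{n=0}^∞ S_n(t) (convergence in operator norm), where S_0(t) = e^{tA} and S_{n+1}(t) = ∫₀^t e^{(t−s)A} B S_n(s) ds. Moreover ‖S_n(t)‖ ≤ e^{|t|·‖A‖} (‖B‖·|t|·e^{‖A‖·|t|})^n / n! for all t ≥ 0 and the series converges absolutely. -/
open NormedSpace intervalIntegral

variable {X : Type*} [NormedAddCommGroup X] [NormedSpace ℂ X] [CompleteSpace X]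

/-- The terms of the Dyson series: `S 0 t = e^{tA}` and
`S (n+1) t = ∫₀^t e^{(t−s)A} B (S n s) ds`. -/
noncomputable def dysonTerm (A B : X →L[ℂ] X) : ℕ → ℝ → (X →L[ℂ] X)
  | 0, t => exp ((t : ℂ) • A)
  | (n + 1), t => ∫ s in (0 : ℝ)..t, (exp (((t - s : ℝ) : ℂ) • A)) ∘L B ∘L dysonTerm A B n s


lemma my_norm_exp_le (T : X →L[ℂ] X) : ‖exp T‖ ≤ Real.exp ‖T‖ := by
  rw [exp_eq_tsum ℂ]
  refine (norm_tsum_le_tsum_norm (norm_expSeries_summable' (𝕂 := ℂ) T)).trans ?_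
  rw [Real.exp_eq_exp_ℝ, exp_eq_tsum ℝ]
  refine Summable.tsum_le_tsum (fun n => ?_) (norm_expSeries_summable' (𝕂 := ℂ) T)
    (expSeries_summable' (𝕂 := ℝ) ‖T‖)
  rw [norm_smul, smul_eq_mul]
  have h1 : ‖((n.factorial : ℂ)⁻¹)‖ = (n.factorial : ℝ)⁻¹ := by
    simp
  rw [h1]
  have h2 : ‖T ^ n‖ ≤ ‖T‖ ^ n := by
    rcases Nat.eq_zero_or_pos n with h | h
    · subst h; rw [pow_zero, pow_zero]; exact ContinuousLinearMap.norm_id_le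
    · exact norm_pow_le' T h
  exact mul_le_mul_of_nonneg_left h2 (by positivity)

lemma norm_expc_le (A : X →L[ℂ] X) (s : ℝ) :
    ‖exp ((s : ℂ) • A)‖ ≤ Real.exp (|s| * ‖A‖) := by
  refine (my_norm_exp_le _).trans (Real.exp_le_exp.mpr ?_)
  rw [norm_smul ((s:ℂ)) A]; simp

lemma expc_cont (A : X →L[ℂ] X) : Continuous fun s : ℝ => exp ((s : ℂ) • A) := by
  letI : NormedAlgebra ℚ (X →L[ℂ] X) := NormedAlgebra.restrictScalars ℚ ℂ _
  exact exp_continuous.comp (Complex.continuous_ofReal.smul continuous_const)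

lemma hasDerivAt_expc (A : X →L[ℂ] X) (t : ℝ) :
    HasDerivAt (fun s : ℝ => exp ((s : ℂ) • A)) (exp ((t : ℂ) • A) * A) t := by
  have h := hasDerivAt_exp_smul_const (𝕂 := ℝ) A t
  simpa [Complex.coe_smul] using h

lemma iter_cont (A B : X →L[ℂ] X) (f : ℕ → ℝ → (X →L[ℂ] X)) (hf0 : Continuous (f 0))
    (hrec : ∀ n (s : ℝ), f (n + 1) s
      = ∫ u in (0 : ℝ)..s, exp (((s - u : ℝ) : ℂ) • A) ∘L B ∘L f n u) :
    ∀ n, Continuous (f n) := by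
  intro n
  induction n with
  | zero => exact hf0
  | succ n ih =>
    have hF : Continuous (Function.uncurry fun (s u : ℝ) =>
        exp (((s - u : ℝ) : ℂ) • A) ∘L B ∘L f n u) := by
      simp only [← ContinuousLinearMap.mul_def, Function.uncurry]
      exact ((expc_cont A).comp (continuous_fst.sub continuous_snd)).mul
        (continuous_const.mul (ih.comp continuous_snd))
    have := intervalIntegral.continuous_parametric_intervalIntegral_of_continuous
      (μ := MeasureTheory.volume) (a₀ := (0:ℝ)) hF continuous_id
    have heq : (f (n + 1)) = fun s : ℝ =>
        ∫ u in (0 : ℝ)..s, exp (((s - u : ℝ) : ℂ) • A) ∘L B ∘L f n u := funext (hrec n)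
    rw [heq]
    exact this

lemma iter_bound (A B : X →L[ℂ] X) (f : ℕ → ℝ → (X →L[ℂ] X))
    (hcont : ∀ n, Continuous (f n))
    (hrec : ∀ n (s : ℝ), f (n + 1) s
      = ∫ u in (0 : ℝ)..s, exp (((s - u : ℝ) : ℂ) • A) ∘L B ∘L f n u)
    (t : ℝ) (ht : 0 ≤ t) (K0 : ℝ) (hK0 : ∀ s ∈ Set.Icc (0 : ℝ) t, ‖f 0 s‖ ≤ K0) :
    ∀ n, ∀ s ∈ Set.Icc (0 : ℝ) t,
      ‖f n s‖ ≤ K0 * (‖B‖ * Real.exp (t * ‖A‖)) ^ n * s ^ n / n.factorial := by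
  have hK0' : 0 ≤ K0 := le_trans (norm_nonneg _) (hK0 0 ⟨le_refl _, ht⟩)
  set K : ℝ := Real.exp (t * ‖A‖) with hK
  have hKpos : 0 < K := Real.exp_pos _
  intro n
  induction n with
  | zero => intro s hs; simpa using hK0 s hs
  | succ n ih =>
    intro s hs
    obtain ⟨h0s, hst⟩ := hs
    rw [hrec n s]
    have hexp_bd : ∀ u ∈ Set.Icc (0 : ℝ) s, ‖exp (((s - u : ℝ) : ℂ) • A)‖ ≤ K := by
      intro u hu
      refine (norm_expc_le A _).trans (Real.exp_le_exp.mpr ?_)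
      have : |s - u| ≤ t := by
        rw [abs_of_nonneg (by linarith [hu.1, hu.2])]
        linarith [hu.1, hu.2]
      exact mul_le_mul_of_nonneg_right this (norm_nonneg A)
    have hptwise : ∀ u ∈ Set.Icc (0 : ℝ) s,
        ‖exp (((s - u : ℝ) : ℂ) • A) ∘L B ∘L f n u‖
          ≤ (K * ‖B‖ * (K0 * (‖B‖ * K) ^ n / n.factorial)) * u ^ n := by
      intro u hu
      have hfu : ‖f n u‖ ≤ (K0 * (‖B‖ * K) ^ n / n.factorial) * u ^ n := by
        have := ih u ⟨hu.1, le_trans hu.2 hst⟩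
        calc ‖f n u‖ ≤ K0 * (‖B‖ * K) ^ n * u ^ n / n.factorial := this
          _ = (K0 * (‖B‖ * K) ^ n / n.factorial) * u ^ n := by ring
      calc ‖exp (((s - u : ℝ) : ℂ) • A) ∘L B ∘L f n u‖
          ≤ ‖exp (((s - u : ℝ) : ℂ) • A)‖ * ‖B ∘L f n u‖ :=
            ContinuousLinearMap.opNorm_comp_le _ _
        _ ≤ ‖exp (((s - u : ℝ) : ℂ) • A)‖ * (‖B‖ * ‖f n u‖) := by
            gcongr
            exact ContinuousLinearMap.opNorm_comp_le _ _
        _ ≤ K * (‖B‖ * ((K0 * (‖B‖ * K) ^ n / n.factorial) * u ^ n)) := by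
            gcongr
            exact hexp_bd u hu
        _ = (K * ‖B‖ * (K0 * (‖B‖ * K) ^ n / n.factorial)) * u ^ n := by ring
    have hint1 : IntervalIntegrable
        (fun u => ‖exp (((s - u : ℝ) : ℂ) • A) ∘L B ∘L f n u‖)
        MeasureTheory.volume 0 s := by
      apply Continuous.intervalIntegrable
      apply Continuous.norm
      simp only [← ContinuousLinearMap.mul_def]
      exact ((expc_cont A).comp (continuous_const.sub continuous_id)).mul
        (continuous_const.mul (hcont n))
    have hint2 : IntervalIntegrable
        (fun u : ℝ => (K * ‖B‖ * (K0 * (‖B‖ * K) ^ n / n.factorial)) * u ^ n)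
        MeasureTheory.volume 0 s := by
      apply Continuous.intervalIntegrable; fun_prop
    calc ‖∫ u in (0 : ℝ)..s, exp (((s - u : ℝ) : ℂ) • A) ∘L B ∘L f n u‖
        ≤ ∫ u in (0 : ℝ)..s, ‖exp (((s - u : ℝ) : ℂ) • A) ∘L B ∘L f n u‖ :=
          intervalIntegral.norm_integral_le_integral_norm h0s
      _ ≤ ∫ u in (0 : ℝ)..s, (K * ‖B‖ * (K0 * (‖B‖ * K) ^ n / n.factorial)) * u ^ n := by
          apply intervalIntegral.integral_mono_on h0s hint1 hint2
          intro u hu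
          exact hptwise u hu
      _ = (K * ‖B‖ * (K0 * (‖B‖ * K) ^ n / n.factorial)) * (s ^ (n + 1) / (n + 1)) := by
          rw [intervalIntegral.integral_const_mul, integral_pow]
          ring
      _ = K0 * (‖B‖ * K) ^ (n + 1) * s ^ (n + 1) / (n + 1).factorial := by
          rw [Nat.factorial_succ]
          push_cast
          field_simp
          ring

lemma duhamel (A B : X →L[ℂ] X) (t : ℝ) :
    exp ((t : ℂ) • (A + B)) = exp ((t : ℂ) • A) +
      ∫ s in (0 : ℝ)..t,
        exp (((t - s : ℝ) : ℂ) • A) ∘L B ∘L exp ((s : ℂ) • (A + B)) := by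
  set C := A + B with hC
  have hderiv : ∀ s ∈ Set.uIcc (0 : ℝ) t,
      HasDerivAt (fun u : ℝ => exp (((t - u : ℝ) : ℂ) • A) * exp ((u : ℂ) • C))
        (exp (((t - s : ℝ) : ℂ) • A) ∘L B ∘L exp ((s : ℂ) • C)) s := by
    intro s _
    have h1 : HasDerivAt (fun v : ℝ => exp ((v : ℂ) • A))
        (exp (((t - s : ℝ) : ℂ) • A) * A) (t - s) := hasDerivAt_expc A (t - s)
    have h2 : HasDerivAt (fun u : ℝ => t - u) (-1 : ℝ) s := by
      simpa using (hasDerivAt_id s).const_sub t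
    have h3 : HasDerivAt ((fun v : ℝ => exp ((v : ℂ) • A)) ∘ (fun u : ℝ => t - u))
        ((-1 : ℝ) • (exp (((t - s : ℝ) : ℂ) • A) * A)) s := HasDerivAt.scomp s h1 h2
    have h3' : HasDerivAt (fun u : ℝ => exp (((t - u : ℝ) : ℂ) • A))
        ((-1 : ℝ) • (exp (((t - s : ℝ) : ℂ) • A) * A)) s := h3
    have h4 : HasDerivAt (fun u : ℝ => exp ((u : ℂ) • C))
        (exp ((s : ℂ) • C) * C) s := hasDerivAt_expc C s
    have h5 := h3'.mul h4
    convert h5 using 1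
    case e'_4 => rfl
    case e'_5 => rfl
    case e'_6 => rfl
    case e'_8 => rfl
    set P := exp (((t - s : ℝ) : ℂ) • A)
    set Q := exp ((s : ℂ) • C)
    have hcomm : Q * C = C * Q :=
      (((Commute.refl C).smul_left ((s : ℂ))).exp_left).eq
    simp only [← ContinuousLinearMap.mul_def]
    rw [hcomm, hC]
    simp only [neg_one_smul]
    noncomm_ring
  have hint : IntervalIntegrable
      (fun s => exp (((t - s : ℝ) : ℂ) • A) ∘L B ∘L exp ((s : ℂ) • C))
      MeasureTheory.volume 0 t := by
    apply Continuous.intervalIntegrable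
    simp only [← ContinuousLinearMap.mul_def]
    exact ((expc_cont A).comp (continuous_const.sub continuous_id)).mul
      (continuous_const.mul (expc_cont C))
  have hFTC := intervalIntegral.integral_eq_sub_of_hasDerivAt hderiv hint
  simp only [sub_self, sub_zero, Complex.ofReal_zero, zero_smul, exp_zero, one_mul,
    mul_one] at hFTC
  rw [hFTC]
  abel

/-- For bounded operators `A`, `B` on a Banach space and `C = A + B`,
the Dyson series `∑ₙ Sₙ(t)` converges in operator norm to `e^{tC}`, with
`‖Sₙ(t)‖ ≤ e^{|t|‖A‖}(‖B‖|t|e^{‖A‖|t|})ⁿ/n!` for `t ≥ 0`, and the series converges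
absolutely. -/
theorem dyson_series_expansion (A B : X →L[ℂ] X) (t : ℝ) (ht : 0 ≤ t) :
    HasSum (fun n => dysonTerm A B n t) (exp ((t : ℂ) • (A + B))) ∧
    (∀ n : ℕ, ‖dysonTerm A B n t‖ ≤
      Real.exp (|t| * ‖A‖) * (‖B‖ * |t| * Real.exp (‖A‖ * |t|)) ^ n / n.factorial) ∧
    Summable (fun n => ‖dysonTerm A B n t‖) := by
  have hrecS : ∀ n (s : ℝ), dysonTerm A B (n + 1) s
      = ∫ u in (0 : ℝ)..s, exp (((s - u : ℝ) : ℂ) • A) ∘L B ∘L dysonTerm A B n u :=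
    fun n s => rfl
  have hcontS : ∀ n, Continuous (dysonTerm A B n) :=
    iter_cont A B _ (expc_cont A) hrecS
  set K : ℝ := Real.exp (t * ‖A‖) with hKdef
  have hK0S : ∀ s ∈ Set.Icc (0 : ℝ) t, ‖dysonTerm A B 0 s‖ ≤ K := by
    intro s hs
    show ‖exp ((s : ℂ) • A)‖ ≤ K
    refine (norm_expc_le A s).trans (Real.exp_le_exp.mpr ?_)
    have : |s| ≤ t := by rw [abs_of_nonneg hs.1]; exact hs.2
    exact mul_le_mul_of_nonneg_right this (norm_nonneg A)
  have hboundS := iter_bound A B _ hcontS hrecS t ht K hK0S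
  have habs : |t| = t := abs_of_nonneg ht
  have hbound : ∀ n : ℕ, ‖dysonTerm A B n t‖ ≤
      Real.exp (|t| * ‖A‖) * (‖B‖ * |t| * Real.exp (‖A‖ * |t|)) ^ n / n.factorial := by
    intro n
    have h := hboundS n t ⟨ht, le_refl t⟩
    rw [habs, mul_comm ‖A‖ t]
    refine le_of_le_of_eq h ?_
    rw [← hKdef]
    ring
  have hsummable : Summable (fun n => ‖dysonTerm A B n t‖) := by
    refine Summable.of_nonneg_of_le (fun n => norm_nonneg _) hbound ?_
    have := (Real.summable_pow_div_factorial
      (‖B‖ * |t| * Real.exp (‖A‖ * |t|))).mul_left (Real.exp (|t| * ‖A‖))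
    simpa [mul_div_assoc] using this
  -- remainder term
  set R : ℕ → ℝ → (X →L[ℂ] X) := fun n s =>
    exp ((s : ℂ) • (A + B)) - ∑ k ∈ Finset.range n, dysonTerm A B k s with hR
  have hcontR : ∀ n, Continuous (R n) := by
    intro n
    exact (expc_cont (A + B)).sub (continuous_finset_sum _ fun k _ => hcontS k)
  have hrecR : ∀ n (s : ℝ), R (n + 1) s
      = ∫ u in (0 : ℝ)..s, exp (((s - u : ℝ) : ℂ) • A) ∘L B ∘L R n u := by
    intro n s
    have hintC : IntervalIntegrable
        (fun u => exp (((s - u : ℝ) : ℂ) • A) ∘L B ∘L exp ((u : ℂ) • (A + B)))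
        MeasureTheory.volume 0 s := by
      apply Continuous.intervalIntegrable
      simp only [← ContinuousLinearMap.mul_def]
      exact ((expc_cont A).comp (continuous_const.sub continuous_id)).mul
        (continuous_const.mul (expc_cont (A + B)))
    have hintS : ∀ k, IntervalIntegrable
        (fun u => exp (((s - u : ℝ) : ℂ) • A) ∘L B ∘L dysonTerm A B k u)
        MeasureTheory.volume 0 s := by
      intro k
      apply Continuous.intervalIntegrable
      simp only [← ContinuousLinearMap.mul_def]
      exact ((expc_cont A).comp (continuous_const.sub continuous_id)).mul
        (continuous_const.mul (hcontS k))
    have hcongr : ∀ u : ℝ, exp (((s - u : ℝ) : ℂ) • A) ∘L B ∘L R n u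
        = exp (((s - u : ℝ) : ℂ) • A) ∘L B ∘L exp ((u : ℂ) • (A + B))
          - ∑ k ∈ Finset.range n, exp (((s - u : ℝ) : ℂ) • A) ∘L B ∘L dysonTerm A B k u := by
      intro u
      simp only [hR, ← ContinuousLinearMap.mul_def, mul_sub, Finset.mul_sum]
    have hrhs : (∫ u in (0 : ℝ)..s, exp (((s - u : ℝ) : ℂ) • A) ∘L B ∘L R n u)
        = (∫ u in (0 : ℝ)..s,
            exp (((s - u : ℝ) : ℂ) • A) ∘L B ∘L exp ((u : ℂ) • (A + B)))
          - ∑ k ∈ Finset.range n, ∫ u in (0 : ℝ)..s,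
            exp (((s - u : ℝ) : ℂ) • A) ∘L B ∘L dysonTerm A B k u := by
      rw [intervalIntegral.integral_congr (g := fun u =>
        exp (((s - u : ℝ) : ℂ) • A) ∘L B ∘L exp ((u : ℂ) • (A + B))
          - ∑ k ∈ Finset.range n, exp (((s - u : ℝ) : ℂ) • A) ∘L B ∘L dysonTerm A B k u)
        (fun u _ => hcongr u)]
      have hsumInt : IntervalIntegrable (fun u : ℝ => ∑ k ∈ Finset.range n,
          exp (((s - u : ℝ) : ℂ) • A) ∘L B ∘L dysonTerm A B k u)
          MeasureTheory.volume 0 s := by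
        have := IntervalIntegrable.sum (μ := MeasureTheory.volume) (a := (0:ℝ)) (b := s)
          (f := fun k u => exp (((s - u : ℝ) : ℂ) • A) ∘L B ∘L dysonTerm A B k u)
          (Finset.range n) (fun k _ => hintS k)
        have heq : (∑ k ∈ Finset.range n, fun u : ℝ =>
            exp (((s - u : ℝ) : ℂ) • A) ∘L B ∘L dysonTerm A B k u)
            = fun u : ℝ => ∑ k ∈ Finset.range n,
              exp (((s - u : ℝ) : ℂ) • A) ∘L B ∘L dysonTerm A B k u := by
          ext u; simp [Finset.sum_apply]
        exact heq ▸ this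
      rw [intervalIntegral.integral_sub hintC hsumInt]
      rw [intervalIntegral.integral_finset_sum (fun k _ => hintS k)]
    rw [hrhs, hR]
    simp only []
    rw [Finset.sum_range_succ', duhamel A B s]
    have hS0 : dysonTerm A B 0 s = exp ((s : ℂ) • A) := rfl
    have hSsucc : ∀ k, dysonTerm A B (k + 1) s
        = ∫ u in (0 : ℝ)..s, exp (((s - u : ℝ) : ℂ) • A) ∘L B ∘L dysonTerm A B k u :=
      fun k => rfl
    simp only [hS0, hSsucc]
    abel
  have hK0R : ∀ s ∈ Set.Icc (0 : ℝ) t, ‖R 0 s‖ ≤ Real.exp (t * ‖A + B‖) := by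
    intro s hs
    simp only [hR, Finset.range_zero, Finset.sum_empty, sub_zero]
    refine (norm_expc_le (A + B) s).trans (Real.exp_le_exp.mpr ?_)
    have : |s| ≤ t := by rw [abs_of_nonneg hs.1]; exact hs.2
    exact mul_le_mul_of_nonneg_right this (norm_nonneg _)
  have hboundR := iter_bound A B R hcontR hrecR t ht (Real.exp (t * ‖A + B‖)) hK0R
  have htend0 : Filter.Tendsto (fun n => R n t) Filter.atTop (nhds 0) := by
    rw [tendsto_zero_iff_norm_tendsto_zero]
    refine squeeze_zero (g := fun n : ℕ => Real.exp (t * ‖A + B‖) *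
        ((‖B‖ * K * t) ^ n / n.factorial)) (fun n => norm_nonneg _) (fun n => ?_) ?_
    · refine le_of_le_of_eq (hboundR n t ⟨ht, le_refl t⟩) ?_
      simp only [mul_pow]
      ring
    · have := (FloorSemiring.tendsto_pow_div_factorial_atTop (‖B‖ * K * t)).const_mul
        (Real.exp (t * ‖A + B‖))
      simpa using this
  have hpartial : ∀ n, ∑ k ∈ Finset.range n, dysonTerm A B k t
      = exp ((t : ℂ) • (A + B)) - R n t := by
    intro n; simp only [hR]; abel
  have htends : Filter.Tendsto (fun n => ∑ k ∈ Finset.range n, dysonTerm A B k t)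
      Filter.atTop (nhds (exp ((t : ℂ) • (A + B)))) := by
    simp only [hpartial]
    simpa using Filter.Tendsto.sub
      (tendsto_const_nhds (x := exp ((t : ℂ) • (A + B))) (f := Filter.atTop (α := ℕ)))
      htend0
  exact ⟨(hasSum_iff_tendsto_nat_of_summable_norm hsummable).mpr htends, hbound, hsummable⟩
end

section
/- Let V : ℕ → ℝ be a bounded potential and W : ℕ → ℝ agree with V on {1,…,N}. Fix M, T > 0 and suppose t₁,…,t_k ∈ (0,T] are times such that for every λ ∈ [−M,M] there is i with |⟨δ₁, e^{-it_i H_{V,λ}}δ₁⟩| ≥ 1/2, where H_{V,λ} = Δ + λ⟨δ₁,·⟩δ₁ + V. If 2 ∑_{m≥N} ((2+M)T)^m/m! < ε, then for every λ ∈ [−M,M] there is i with |⟨δ₁, e^{-it_i H_{W,λ}}δ₁⟩| ≥ 1/2 − ε. -/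
open NormedSpace

set_option maxHeartbeats 1000000

noncomputable section

/-- The Hilbert space `ℓ²(ℕ)` (sites of the paper are indexed here from `0`,
so agreement of `V` and `W` on the first `N` sites reads `∀ n < N, V n = W n`). -/
abbrev ℓ2 : Type := lp (fun _ : ℕ => ℂ) 2

/-- The indicator `δ₁` of the first site (index `0`). -/
def δ₁ : ℓ2 := lp.single 2 0 1

/-- `Δ` is the discrete Laplacian on `ℓ²(ℕ)` with Dirichlet boundary condition. -/
def IsDirichletLaplacian (Δ : ℓ2 →L[ℂ] ℓ2) : Prop :=
  ∀ ψ : ℓ2, (Δ ψ) 0 = ψ 1 ∧ ∀ n : ℕ, (Δ ψ) (n + 1) = ψ n + ψ (n + 2)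

/-- `MV` is the operator of multiplication by the potential `V`. -/
def IsMulBy (V : ℕ → ℝ) (MV : ℓ2 →L[ℂ] ℓ2) : Prop :=
  ∀ (ψ : ℓ2) (n : ℕ), (MV ψ) n = (V n : ℂ) * ψ n

/-- `B` is the rank-one operator `⟨δ₁,·⟩δ₁`. -/
def IsRankOneDelta (B : ℓ2 →L[ℂ] ℓ2) : Prop :=
  ∀ ψ : ℓ2, B ψ = (inner ℂ δ₁ ψ : ℂ) • δ₁

namespace PF

open Complex

abbrev CL : Type := ℓ2 →L[ℂ] ℓ2

/-! ### basic vectors and functionals -/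

def en (n : ℕ) : ℓ2 := lp.single 2 n 1

lemma en_apply (n j : ℕ) : (en n) j = if j = n then 1 else 0 := by
  by_cases h : j = n <;> simp [en, lp.single_apply, h]

lemma norm_en (n : ℕ) : ‖en n‖ = 1 := by
  have := lp.norm_single (p := 2) (E := fun _ : ℕ => ℂ) (by norm_num) n (1 : ℂ)
  simpa [en] using this

lemma δ₁_apply (j : ℕ) : δ₁ j = if j = 0 then 1 else 0 := en_apply 0 j

lemma norm_δ₁ : ‖δ₁‖ = 1 := norm_en 0

lemma inner_en (n : ℕ) (ψ : ℓ2) : (inner ℂ (en n) ψ : ℂ) = ψ n := by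
  rw [en, lp.inner_single_left]
  simp [RCLike.inner_apply]

lemma inner_en' (n : ℕ) (ψ : ℓ2) : (inner ℂ ψ (en n) : ℂ) = (starRingEnd ℂ) (ψ n) := by
  rw [en, lp.inner_single_right]
  simp [RCLike.inner_apply]

lemma inner_δ₁ (ψ : ℓ2) : (inner ℂ δ₁ ψ : ℂ) = ψ 0 := inner_en 0 ψ

lemma δ₁_supp (N : ℕ) (hN : 1 ≤ N) : ∀ n, N ≤ n → δ₁ n = 0 := by
  intro n hn
  rw [δ₁_apply]
  have : n ≠ 0 := by omega
  simp [this]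

def ev (n : ℕ) : ℓ2 →L[ℂ] ℂ :=
  LinearMap.mkContinuous
    { toFun := fun ψ => ψ n
      map_add' := fun f g => by simp [lp.coeFn_add]
      map_smul' := fun c f => by simp [lp.coeFn_smul] }
    1 (fun ψ => by
        show ‖ψ n‖ ≤ 1 * ‖ψ‖
        simpa using lp.norm_apply_le_norm (by norm_num) ψ n)

@[simp] lemma ev_apply (n : ℕ) (ψ : ℓ2) : ev n ψ = ψ n := rfl

/-! ### the coupling operator -/

def Gam (N : ℕ) : CL := (ev N).smulRight (en (N - 1)) + (ev (N - 1)).smulRight (en N)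

lemma Gam_apply (N : ℕ) (ψ : ℓ2) : Gam N ψ = ψ N • en (N - 1) + ψ (N - 1) • en N := by
  simp [Gam]

lemma Gam_coord (N : ℕ) (ψ : ℓ2) (j : ℕ) :
    (Gam N ψ) j = (if j = N - 1 then ψ N else 0) + (if j = N then ψ (N - 1) else 0) := by
  rw [Gam_apply, lp.coeFn_add]
  simp only [Pi.add_apply, lp.coeFn_smul, Pi.smul_apply, en_apply, smul_eq_mul]
  split_ifs <;> ring

/-! ### symmetric operators -/

def SymOp (H : CL) : Prop := ∀ ψ : ℓ2, (inner ℂ (H ψ) ψ : ℂ) = inner ℂ ψ (H ψ)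

lemma SymOp.add {H K : CL} (h1 : SymOp H) (h2 : SymOp K) : SymOp (H + K) := by
  intro ψ
  simp only [ContinuousLinearMap.add_apply, inner_add_left, inner_add_right, h1 ψ, h2 ψ]

lemma SymOp.sub {H K : CL} (h1 : SymOp H) (h2 : SymOp K) : SymOp (H - K) := by
  intro ψ
  simp only [ContinuousLinearMap.sub_apply, inner_sub_left, inner_sub_right, h1 ψ, h2 ψ]

lemma SymOp.real_smul {H : CL} (h : SymOp H) (r : ℝ) : SymOp ((r : ℂ) • H) := by
  intro ψ
  simp only [ContinuousLinearMap.smul_apply, inner_smul_left, inner_smul_right, h ψ,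
    Complex.conj_ofReal]

lemma inner_l2 (f g : ℓ2) : (inner ℂ f g : ℂ) = ∑' n, (starRingEnd ℂ) (f n) * g n := by
  rw [lp.inner_eq_tsum]
  exact tsum_congr fun n => by simp [RCLike.inner_apply, mul_comm]

lemma summable_inner_l2 (f g : ℓ2) : Summable fun n => (starRingEnd ℂ) (f n) * g n := by
  have := lp.summable_inner (𝕜 := ℂ) f g
  simpa [RCLike.inner_apply, mul_comm] using this

lemma summable_conj {f : ℕ → ℂ} (h : Summable f) :
    Summable fun n => (starRingEnd ℂ) (f n) :=
  (h.map (starRingEnd ℂ) Complex.continuous_conj).congr (fun _ => rfl)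

lemma summable_sq (ψ : ℓ2) : Summable fun n => ‖ψ n‖ ^ 2 := by
  have h := summable_inner_l2 ψ ψ
  have h2 : Summable fun n => ((‖ψ n‖ ^ 2 : ℝ) : ℂ) := by
    apply h.congr
    intro n
    rw [mul_comm, Complex.mul_conj]
    norm_cast
    rw [Complex.normSq_eq_norm_sq]
  have h3 := h2.map Complex.reCLM Complex.continuous_re
  apply h3.congr
  intro n
  show Complex.reCLM ((‖ψ n‖ ^ 2 : ℝ) : ℂ) = ‖ψ n‖ ^ 2
  rw [Complex.reCLM_apply, Complex.ofReal_re]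

lemma summable_shift (ψ : ℓ2) : Summable fun n => (starRingEnd ℂ) (ψ n) * ψ (n + 1) := by
  apply Summable.of_norm
  have h1 : Summable fun n => (‖ψ n‖ ^ 2 + ‖ψ (n + 1)‖ ^ 2) / 2 := by
    apply Summable.div_const
    exact (summable_sq ψ).add ((summable_nat_add_iff 1).2 (summable_sq ψ))
  apply Summable.of_nonneg_of_le (fun n => norm_nonneg _) _ h1
  intro n
  rw [norm_mul, RCLike.norm_conj]
  nlinarith [norm_nonneg (ψ n), norm_nonneg (ψ (n + 1)), sq_nonneg (‖ψ n‖ - ‖ψ (n + 1)‖)]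

lemma symop_laplacian {Δ : CL} (hΔ : IsDirichletLaplacian Δ) : SymOp Δ := by
  intro ψ
  set a : ℕ → ℂ := fun n => (starRingEnd ℂ) (ψ n) * ψ (n + 1) with ha
  have hsa : Summable a := summable_shift ψ
  have hsc : Summable (fun n => (starRingEnd ℂ) (a n)) := summable_conj hsa
  have hsas : Summable (fun n => a (n + 1)) := (summable_nat_add_iff 1).2 hsa
  have hscs : Summable (fun n => (starRingEnd ℂ) (a (n + 1))) := (summable_nat_add_iff 1).2 hsc
  have hF : Summable fun n => (starRingEnd ℂ) ((Δ ψ) n) * ψ n := summable_inner_l2 (Δ ψ) ψ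
  have hG : Summable fun n => (starRingEnd ℂ) (ψ n) * (Δ ψ) n := summable_inner_l2 ψ (Δ ψ)
  rw [inner_l2, inner_l2, hF.tsum_eq_zero_add, hG.tsum_eq_zero_add]
  have e1 : ∀ n : ℕ, (starRingEnd ℂ) ((Δ ψ) (n + 1)) * ψ (n + 1)
      = a n + (starRingEnd ℂ) (a (n + 1)) := by
    intro n
    rw [(hΔ ψ).2 n]
    simp only [ha, map_add, map_mul, Complex.conj_conj]
    have h12 : n + 1 + 1 = n + 2 := rfl
    rw [h12]
    ring
  have e2 : ∀ n : ℕ, (starRingEnd ℂ) (ψ (n + 1)) * (Δ ψ) (n + 1)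
      = (starRingEnd ℂ) (a n) + a (n + 1) := by
    intro n
    rw [(hΔ ψ).2 n]
    simp only [ha, map_mul, Complex.conj_conj]
    have h12 : n + 1 + 1 = n + 2 := rfl
    rw [h12]
    ring
  rw [tsum_congr e1, tsum_congr e2, (hΔ ψ).1]
  rw [hsa.tsum_add hscs, hsc.tsum_add hsas]
  rw [hsa.tsum_eq_zero_add, hsc.tsum_eq_zero_add]
  simp only [ha, map_mul, Complex.conj_conj]
  ring

lemma symop_mul {V : ℕ → ℝ} {MV : CL} (hMV : IsMulBy V MV) : SymOp MV := by
  intro ψ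
  rw [inner_l2, inner_l2]
  apply tsum_congr
  intro n
  rw [hMV ψ n, map_mul, Complex.conj_ofReal]
  ring

lemma symop_B {B : CL} (hB : IsRankOneDelta B) : SymOp B := by
  intro ψ
  rw [hB ψ, inner_smul_left, inner_smul_right, ← inner_conj_symm ψ δ₁]
  ring

lemma symop_Gam (N : ℕ) : SymOp (Gam N) := by
  intro ψ
  rw [Gam_apply, inner_add_left, inner_add_right, inner_smul_left, inner_smul_left,
    inner_smul_right, inner_smul_right, inner_en, inner_en, inner_en', inner_en']
  ring

/-! ### exponential curves -/

def Agen (H : CL) : CL := (-Complex.I) • H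

def U (H : CL) (s : ℝ) : CL := exp ((s : ℂ) • Agen H)

lemma U_zero (H : CL) : U H 0 = 1 := by
  simp [U, exp_zero]

lemma hasDerivAt_U (H : CL) (s : ℝ) : HasDerivAt (fun u : ℝ => U H u) (Agen H * U H s) s := by
  unfold U
  have h := hasDerivAt_exp_smul_const' (𝕂 := ℂ) (Agen H) ((s : ℂ))
  have h2 := HasDerivAt.scomp_of_eq s h Complex.ofRealCLM.hasDerivAt rfl
  simpa [Function.comp_def, Complex.ofRealCLM_apply, Complex.ofReal_one, one_smul] using h2

lemma hasDerivAt_U_apply (H : CL) (x : ℓ2) (s : ℝ) :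
    HasDerivAt (fun u : ℝ => U H u x) (Agen H (U H s x)) s := by
  have h := ((ContinuousLinearMap.apply ℂ ℓ2 x).restrictScalars ℝ).hasFDerivAt.comp_hasDerivAt
    s (hasDerivAt_U H s)
  simpa [ContinuousLinearMap.mul_apply, Function.comp_def] using h

lemma continuous_U (H : CL) : Continuous fun s : ℝ => U H s :=
  continuous_iff_continuousAt.2 fun s => (hasDerivAt_U H s).continuousAt

lemma continuous_U_apply (H : CL) (x : ℓ2) : Continuous fun s : ℝ => U H s x :=
  continuous_iff_continuousAt.2 fun s => (hasDerivAt_U_apply H x s).continuousAt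

def coord (H : CL) (j : ℕ) (s : ℝ) : ℂ := (U H s δ₁) j

lemma hasDerivAt_coord (H : CL) (j : ℕ) (s : ℝ) :
    HasDerivAt (coord H j) ((Agen H (U H s δ₁)) j) s := by
  have h := ((ev j).restrictScalars ℝ).hasFDerivAt.comp_hasDerivAt s (hasDerivAt_U_apply H δ₁ s)
  exact h

lemma continuous_coord (H : CL) (j : ℕ) : Continuous (coord H j) :=
  continuous_iff_continuousAt.2 fun s => (hasDerivAt_coord H j s).continuousAt

lemma coord_at_zero (H : CL) (j : ℕ) : coord H j 0 = if j = 0 then 1 else 0 := by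
  rw [coord, U_zero]
  simpa using δ₁_apply j

lemma U_isometry {H : CL} (hH : SymOp H) (s : ℝ) (x : ℓ2) : ‖U H s x‖ = ‖x‖ := by
  have key : ∀ u : ℝ, HasDerivAt (fun r : ℝ => (inner ℂ (U H r x) (U H r x) : ℂ)) 0 u := by
    intro u
    have hd := hasDerivAt_U_apply H x u
    have h2 := HasDerivAt.inner ℂ hd hd
    refine h2.congr_deriv ?_
    rw [Agen]
    simp only [ContinuousLinearMap.smul_apply, inner_smul_left, inner_smul_right, map_neg,
      Complex.conj_I]
    rw [hH (U H u x)]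
    ring
  have hconst : (inner ℂ (U H s x) (U H s x) : ℂ) = inner ℂ (U H 0 x) (U H 0 x) :=
    is_const_of_deriv_eq_zero (fun r => (key r).differentiableAt)
      (fun r => (key r).deriv) s 0
  have h0 : (U H 0) x = x := by rw [U_zero]; simp
  rw [h0] at hconst
  rw [inner_self_eq_norm_sq_to_K, inner_self_eq_norm_sq_to_K] at hconst
  have hsq : ‖U H s x‖ ^ 2 = ‖x‖ ^ 2 := by exact_mod_cast hconst
  rw [← Real.sqrt_sq (norm_nonneg (U H s x)), hsq, Real.sqrt_sq (norm_nonneg x)]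

lemma norm_coord_le_one {H : CL} (hH : SymOp H) (j : ℕ) (s : ℝ) : ‖coord H j s‖ ≤ 1 := by
  have h1 : ‖(U H s δ₁) j‖ ≤ ‖U H s δ₁‖ :=
    lp.norm_apply_le_norm (by norm_num) (U H s δ₁) j
  rw [coord]
  calc ‖(U H s δ₁) j‖ ≤ ‖U H s δ₁‖ := h1
  _ = ‖δ₁‖ := U_isometry hH s δ₁
  _ = 1 := norm_δ₁

/-! ### power series facts -/

lemma exp_apply_eq_tsum (K : CL) (x : ℓ2) :
    exp K x = ∑' m : ℕ, ((m.factorial : ℂ))⁻¹ • ((K ^ m) x) := by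
  have hs : Summable fun m : ℕ => ((m.factorial : ℂ))⁻¹ • (K ^ m) :=
    expSeries_summable' (𝕂 := ℂ) K
  have h := (ContinuousLinearMap.apply ℂ ℓ2 x).map_tsum hs
  have h0 : exp K = ∑' m : ℕ, ((m.factorial : ℂ))⁻¹ • (K ^ m) := by
    simp only [exp_eq_tsum ℂ]
  rw [h0]
  simpa [ContinuousLinearMap.smul_apply] using h

lemma exp_coord_zero (K : CL) (N : ℕ)
    (hK : ∀ ψ : ℓ2, (∀ n, N ≤ n → ψ n = 0) → ∀ n, N ≤ n → (K ψ) n = 0)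
    (x : ℓ2) (hx : ∀ n, N ≤ n → x n = 0) (n : ℕ) (hn : N ≤ n) : (exp K x) n = 0 := by
  have hpow : ∀ m : ℕ, ∀ i, N ≤ i → ((K ^ m) x) i = 0 := by
    intro m
    induction m with
    | zero => simpa [ContinuousLinearMap.one_apply] using hx
    | succ m ih =>
      intro i hi
      rw [pow_succ', ContinuousLinearMap.mul_apply]
      exact hK _ ih i hi
  have hs : Summable fun m : ℕ => ((m.factorial : ℂ))⁻¹ • ((K ^ m) x) := by
    have hs0 : Summable fun m : ℕ => ((m.factorial : ℂ))⁻¹ • (K ^ m) :=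
      expSeries_summable' (𝕂 := ℂ) K
    exact (hs0.map (ContinuousLinearMap.apply ℂ ℓ2 x)
      (ContinuousLinearMap.apply ℂ ℓ2 x).continuous).congr
      (fun m => by simp)
  rw [exp_apply_eq_tsum]
  have h3 : (∑' m : ℕ, ((m.factorial : ℂ))⁻¹ • ((K ^ m) x)) n
      = ev n (∑' m : ℕ, ((m.factorial : ℂ))⁻¹ • ((K ^ m) x)) := rfl
  rw [h3, (ev n).map_tsum hs]
  have h4 : ∀ m : ℕ, ev n (((m.factorial : ℂ))⁻¹ • ((K ^ m) x)) = 0 := by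
    intro m
    rw [map_smul, ev_apply, hpow m n hn, smul_zero]
  rw [tsum_congr h4, tsum_zero]

lemma exp_apply_congr (K₁ K₂ : CL) (N : ℕ)
    (hK₁ : ∀ ψ : ℓ2, (∀ n, N ≤ n → ψ n = 0) → ∀ n, N ≤ n → (K₁ ψ) n = 0)
    (heq : ∀ ψ : ℓ2, (∀ n, N ≤ n → ψ n = 0) → K₁ ψ = K₂ ψ)
    (x : ℓ2) (hx : ∀ n, N ≤ n → x n = 0) : exp K₁ x = exp K₂ x := by
  have hpow : ∀ m : ℕ, ((K₁ ^ m) x = (K₂ ^ m) x) ∧ (∀ i, N ≤ i → ((K₁ ^ m) x) i = 0) := by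
    intro m
    induction m with
    | zero => exact ⟨rfl, by simpa [ContinuousLinearMap.one_apply] using hx⟩
    | succ m ih =>
      constructor
      · rw [pow_succ', pow_succ', ContinuousLinearMap.mul_apply,
          ContinuousLinearMap.mul_apply, ← ih.1]
        exact heq _ ih.2
      · intro i hi
        rw [pow_succ', ContinuousLinearMap.mul_apply]
        exact hK₁ _ ih.2 i hi
  rw [exp_apply_eq_tsum, exp_apply_eq_tsum]
  exact tsum_congr fun m => by rw [(hpow m).1]

/-! ### Duhamel principle -/

lemma duhamel (H₁ H₂ : CL) (h1 : SymOp H₁) (x y : ℓ2) (t : ℝ) (ht : 0 ≤ t)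
    (u : ℝ → ℝ) (hu : Continuous u)
    (hb : ∀ s ∈ Set.Icc (0 : ℝ) t, ‖(H₁ - H₂) (U H₂ s y)‖ ≤ u s) :
    ‖(inner ℂ x (U H₁ t y) : ℂ) - (inner ℂ x (U H₂ t y) : ℂ)‖
      ≤ ‖x‖ * ∫ s in (0 : ℝ)..t, u s := by
  set L : CL →L[ℂ] ℂ := (innerSL ℂ x).comp (ContinuousLinearMap.apply ℂ ℓ2 y) with hL
  have hLval : ∀ T : CL, L T = (inner ℂ x (T y) : ℂ) := fun T => rfl
  set F : ℝ → ℂ := fun s => L (U H₁ (t - s) * U H₂ s) with hF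
  have hA : Agen H₂ - Agen H₁ = Complex.I • (H₁ - H₂) := by
    rw [Agen, Agen, ← smul_sub, neg_smul, ← smul_neg, neg_sub]
  have hcomm : ∀ r : ℝ, Agen H₁ * U H₁ r = U H₁ r * Agen H₁ := by
    intro r
    have hc : Commute (Agen H₁) ((r : ℂ) • Agen H₁) := (Commute.refl _).smul_right _
    exact hc.exp_right.eq
  have hFd : ∀ s : ℝ, HasDerivAt F
      (L (U H₁ (t - s) * ((Complex.I • (H₁ - H₂)) * U H₂ s))) s := by
    intro s
    have hinner : HasDerivAt (fun s : ℝ => t - s) (-1 : ℝ) s := by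
      simpa using (hasDerivAt_id s).const_sub t
    have h1' : HasDerivAt (fun s : ℝ => U H₁ (t - s))
        ((-1 : ℝ) • (Agen H₁ * U H₁ (t - s))) s := by
      have := HasDerivAt.scomp_of_eq s (hasDerivAt_U H₁ (t - s)) hinner rfl
      simpa [Function.comp_def] using this
    have h2' : HasDerivAt (fun s : ℝ => U H₂ s) (Agen H₂ * U H₂ s) s := hasDerivAt_U H₂ s
    have hm := h1'.mul h2'
    have heq : ((-1 : ℝ) • (Agen H₁ * U H₁ (t - s))) * U H₂ s
          + U H₁ (t - s) * (Agen H₂ * U H₂ s)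
        = U H₁ (t - s) * ((Complex.I • (H₁ - H₂)) * U H₂ s) := by
      rw [← hA, hcomm (t - s)]
      simp only [neg_one_smul, neg_mul, mul_assoc, sub_mul, mul_sub]
      abel
    have hfin := (L.restrictScalars ℝ).hasFDerivAt.comp_hasDerivAt s hm
    rw [heq] at hfin
    exact hfin
  have hFd' : Continuous fun s : ℝ =>
      L (U H₁ (t - s) * ((Complex.I • (H₁ - H₂)) * U H₂ s)) := by
    apply L.continuous.comp
    exact (((continuous_U H₁).comp (continuous_const.sub continuous_id)).mul
      (continuous_const.mul (continuous_U H₂)))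
  have hFTC : F t - F 0
      = ∫ s in (0 : ℝ)..t, L (U H₁ (t - s) * ((Complex.I • (H₁ - H₂)) * U H₂ s)) := by
    rw [intervalIntegral.integral_eq_sub_of_hasDerivAt (fun s _ => hFd s)
      (hFd'.intervalIntegrable 0 t)]
  have hFt : F t = (inner ℂ x (U H₂ t y) : ℂ) := by
    rw [hF]
    simp only [sub_self]
    rw [U_zero, one_mul, hLval]
  have hF0 : F 0 = (inner ℂ x (U H₁ t y) : ℂ) := by
    rw [hF]
    simp only [sub_zero]
    rw [U_zero, mul_one, hLval]
  have hnorm : ∀ s ∈ Set.Icc (0 : ℝ) t,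
      ‖L (U H₁ (t - s) * ((Complex.I • (H₁ - H₂)) * U H₂ s))‖ ≤ ‖x‖ * u s := by
    intro s hs
    rw [hLval, ContinuousLinearMap.mul_apply, ContinuousLinearMap.mul_apply]
    calc ‖(inner ℂ x (U H₁ (t - s) ((Complex.I • (H₁ - H₂)) (U H₂ s y))) : ℂ)‖
        ≤ ‖x‖ * ‖U H₁ (t - s) ((Complex.I • (H₁ - H₂)) (U H₂ s y))‖ := norm_inner_le_norm _ _
      _ = ‖x‖ * ‖(Complex.I • (H₁ - H₂)) (U H₂ s y)‖ := by rw [U_isometry h1]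
      _ = ‖x‖ * ‖(H₁ - H₂) (U H₂ s y)‖ := by
          rw [ContinuousLinearMap.smul_apply, norm_smul, Complex.norm_I, one_mul]
      _ ≤ ‖x‖ * u s := mul_le_mul_of_nonneg_left (hb s hs) (norm_nonneg x)
  calc ‖(inner ℂ x (U H₁ t y) : ℂ) - (inner ℂ x (U H₂ t y) : ℂ)‖
      = ‖F t - F 0‖ := by rw [hFt, hF0, norm_sub_rev]
    _ = ‖∫ s in (0 : ℝ)..t, L (U H₁ (t - s) * ((Complex.I • (H₁ - H₂)) * U H₂ s))‖ := by
        rw [hFTC]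
    _ ≤ |∫ s in (0 : ℝ)..t, ‖L (U H₁ (t - s) * ((Complex.I • (H₁ - H₂)) * U H₂ s))‖| :=
        intervalIntegral.norm_integral_le_abs_integral_norm
    _ = ∫ s in (0 : ℝ)..t, ‖L (U H₁ (t - s) * ((Complex.I • (H₁ - H₂)) * U H₂ s))‖ := by
        apply _root_.abs_of_nonneg
        apply intervalIntegral.integral_nonneg ht
        intro s _
        exact norm_nonneg _
    _ ≤ ∫ s in (0 : ℝ)..t, ‖x‖ * u s := by
        apply intervalIntegral.integral_mono_on ht
        · exact (hFd'.norm).intervalIntegrable 0 t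
        · exact (continuous_const.mul hu).intervalIntegrable 0 t
        · exact hnorm
    _ = ‖x‖ * ∫ s in (0 : ℝ)..t, u s := intervalIntegral.integral_const_mul _ _

/-! ### the tail function -/

def gt' (j : ℕ) (s : ℝ) : ℝ :=
  Real.exp (2 * s) - ∑ m ∈ Finset.range j, (2 * s) ^ m / m.factorial

lemma gt'_nonneg (j : ℕ) {s : ℝ} (hs : 0 ≤ s) : 0 ≤ gt' j s := by
  rw [gt', sub_nonneg]
  exact Real.sum_le_exp_of_nonneg (by linarith) j

lemma gt'_zero {j : ℕ} (hj : 1 ≤ j) : gt' j 0 = 0 := by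
  rw [gt']
  rw [Finset.sum_eq_single 0]
  · simp
  · intro m _ hm
    simp [zero_pow hm]
  · intro h
    exact absurd (Finset.mem_range.2 hj) h

lemma gt'_succ (j : ℕ) (s : ℝ) : gt' (j + 1) s = gt' j s - (2 * s) ^ j / j.factorial := by
  rw [gt', gt', Finset.sum_range_succ]
  ring

lemma gt'_anti {j : ℕ} {s : ℝ} (hs : 0 ≤ s) : gt' (j + 1) s ≤ gt' j s := by
  rw [gt'_succ]
  have h : 0 ≤ (2 * s) ^ j / (j.factorial : ℝ) := by positivity
  linarith

lemma hasDerivAt_two_mul (s : ℝ) : HasDerivAt (fun r : ℝ => 2 * r) 2 s := by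
  simpa using (hasDerivAt_id s).const_mul (2 : ℝ)

lemma hasDerivAt_exp2 (s : ℝ) :
    HasDerivAt (fun r : ℝ => Real.exp (2 * r)) (2 * Real.exp (2 * s)) s := by
  simpa [mul_comm] using (hasDerivAt_two_mul s).exp

lemma hasDerivAt_mono (m : ℕ) (s : ℝ) :
    HasDerivAt (fun r : ℝ => (2 * r) ^ (m + 1) / (m + 1).factorial)
      (2 * ((2 * s) ^ m / m.factorial)) s := by
  have h := ((hasDerivAt_two_mul s).pow (m + 1)).div_const (((m + 1).factorial : ℝ))
  refine h.congr_deriv ?_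
  have hfac : ((m + 1).factorial : ℝ) = (m + 1) * m.factorial := by
    rw [Nat.factorial_succ]
    push_cast
    ring
  rw [hfac]
  have hne : (m.factorial : ℝ) ≠ 0 := by positivity
  have hne2 : ((m : ℝ) + 1) ≠ 0 := by positivity
  simp only [Nat.add_sub_cancel]
  field_simp
  push_cast
  ring

lemma hasDerivAt_gt' (j : ℕ) (s : ℝ) : HasDerivAt (gt' j) (2 * gt' (j - 1) s) s := by
  unfold gt'
  cases j with
  | zero =>
    simp only [Finset.range_zero, Finset.sum_empty, sub_zero, Nat.zero_sub]
    exact hasDerivAt_exp2 s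
  | succ j =>
    simp only [Nat.add_sub_cancel]
    have hsum : HasDerivAt (fun r : ℝ => ∑ m ∈ Finset.range (j + 1), (2 * r) ^ m / m.factorial)
        (∑ m ∈ Finset.range (j + 1),
          (if m = 0 then (0 : ℝ) else 2 * ((2 * s) ^ (m - 1) / (m - 1).factorial))) s := by
      apply HasDerivAt.fun_sum
      intro m _
      cases m with
      | zero =>
        simp only [pow_zero, Nat.factorial_zero, Nat.cast_one, div_one, reduceIte]
        exact hasDerivAt_const s 1
      | succ i =>
        simpa using hasDerivAt_mono i s
    have hval : (∑ m ∈ Finset.range (j + 1),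
        (if m = 0 then (0 : ℝ) else 2 * ((2 * s) ^ (m - 1) / (m - 1).factorial)))
        = ∑ i ∈ Finset.range j, 2 * ((2 * s) ^ i / i.factorial) := by
      rw [Finset.sum_range_succ']
      simp
    rw [hval] at hsum
    have h := (hasDerivAt_exp2 s).sub hsum
    refine h.congr_deriv ?_
    rw [mul_sub, Finset.mul_sum]

lemma continuous_gt' (j : ℕ) : Continuous (gt' j) := by
  apply Continuous.sub
  · exact Real.continuous_exp.comp (continuous_const.mul continuous_id)
  · apply continuous_finset_sum
    intro m _
    exact ((continuous_const.mul continuous_id).pow m).div_const _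

lemma integral_gt' (j : ℕ) (σ : ℝ) :
    ∫ s in (0 : ℝ)..σ, 2 * gt' j s = gt' (j + 1) σ - gt' (j + 1) 0 := by
  apply intervalIntegral.integral_eq_sub_of_hasDerivAt
  · intro x _
    simpa using hasDerivAt_gt' (j + 1) x
  · exact (continuous_const.mul (continuous_gt' j)).intervalIntegrable _ _

lemma integral_tk (k : ℕ) (σ : ℝ) :
    ∫ s in (0 : ℝ)..σ, 2 * ((2 * s) ^ k / k.factorial)
      = (2 * σ) ^ (k + 1) / (k + 1).factorial := by
  have hder : ∀ x ∈ Set.uIcc (0 : ℝ) σ,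
      HasDerivAt (fun r : ℝ => (2 * r) ^ (k + 1) / (k + 1).factorial)
        (2 * ((2 * x) ^ k / k.factorial)) x := fun x _ => hasDerivAt_mono k x
  have hint : IntervalIntegrable (fun s : ℝ => 2 * ((2 * s) ^ k / k.factorial))
      MeasureTheory.volume 0 σ := by
    apply Continuous.intervalIntegrable
    exact continuous_const.mul (((continuous_const.mul continuous_id).pow k).div_const _)
  rw [intervalIntegral.integral_eq_sub_of_hasDerivAt hder hint]
  simp

/-! ### propagation bound -/

lemma coord_zero_of_inv (H : CL) (N : ℕ) (hN : 1 ≤ N)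
    (hinv : ∀ ψ : ℓ2, (∀ n, N ≤ n → ψ n = 0) → ∀ n, N ≤ n → (H ψ) n = 0)
    (s : ℝ) (n : ℕ) (hn : N ≤ n) : coord H n s = 0 := by
  rw [coord, U]
  apply exp_coord_zero _ N _ δ₁ (δ₁_supp N hN) n hn
  intro ψ hψ i hi
  have h0 : (((s : ℂ) • Agen H) ψ) i = (s : ℂ) * ((Agen H ψ) i) := by
    rw [ContinuousLinearMap.smul_apply, lp.coeFn_smul, Pi.smul_apply, smul_eq_mul]
  have h1 : (Agen H ψ) i = (-Complex.I) * ((H ψ) i) := by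
    rw [Agen, ContinuousLinearMap.smul_apply, lp.coeFn_smul, Pi.smul_apply, smul_eq_mul]
  rw [h0, h1, hinv ψ hψ i hi, mul_zero, mul_zero]

lemma propagation (H : CL) (hsym : SymOp H) (N : ℕ) (hN : 1 ≤ N) (d : ℕ → ℝ)
    (hcomp : ∀ (ψ : ℓ2) (n : ℕ), n < N → (H ψ) n
      = (if n = 0 then 0 else ψ (n - 1)) + (if n = N - 1 then 0 else ψ (n + 1))
        + (d n : ℂ) * ψ n)
    (hinv : ∀ ψ : ℓ2, (∀ n, N ≤ n → ψ n = 0) → ∀ n, N ≤ n → (H ψ) n = 0) :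
    ∀ j, j < N → ∀ s : ℝ, 0 ≤ s → ‖coord H j s‖ ≤ gt' j s := by
  set nb : ℕ → ℝ → ℂ := fun j s =>
    (if j = 0 then 0 else coord H (j - 1) s)
      + (if j = N - 1 then 0 else coord H (j + 1) s) with hnb
  have hcont_nb_raw : ∀ j, Continuous (nb j) := by
    intro j
    apply Continuous.add
    · by_cases h : j = 0
      · simp only [hnb, h, if_true]
        exact continuous_const
      · simp only [hnb, h, if_false]
        exact continuous_coord H (j - 1)
    · by_cases h : j = N - 1
      · simp only [hnb, h, if_true]
        exact continuous_const
      · simp only [hnb, h, if_false]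
        exact continuous_coord H (j + 1)
  have hcont_nb : ∀ j, Continuous (fun s => ‖nb j s‖) := fun j => (hcont_nb_raw j).norm
  have hderiv : ∀ j, j < N → ∀ s : ℝ, HasDerivAt (coord H j)
      (-Complex.I * (nb j s + (d j : ℂ) * coord H j s)) s := by
    intro j hj s
    have h := hasDerivAt_coord H j s
    have hval : (Agen H (U H s δ₁)) j = -Complex.I * (nb j s + (d j : ℂ) * coord H j s) := by
      have h1 : (Agen H (U H s δ₁)) j = (-Complex.I) * ((H (U H s δ₁)) j) := by
        rw [Agen, ContinuousLinearMap.smul_apply, lp.coeFn_smul, Pi.smul_apply, smul_eq_mul]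
      rw [h1, hcomp (U H s δ₁) j hj]
      simp only [hnb, coord]
      try ring
    rw [hval] at h
    exact h
  have hFTC : ∀ j, j < N → ∀ σ : ℝ, 0 ≤ σ →
      ‖coord H j σ‖ ≤ ‖coord H j 0‖ + ∫ s in (0 : ℝ)..σ, ‖nb j s‖ := by
    intro j hj σ hσ
    set e : ℝ → ℂ := fun s => Complex.exp (Complex.I * (d j) * s) with he
    have he_deriv : ∀ s : ℝ, HasDerivAt e (e s * (Complex.I * (d j))) s := by
      intro s
      have h1 : HasDerivAt (fun z : ℂ => Complex.I * (d j) * z) (Complex.I * (d j)) (s : ℂ) := by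
        simpa using (hasDerivAt_id (s : ℂ)).const_mul (Complex.I * (d j))
      exact h1.comp_ofReal.cexp
    have he_norm : ∀ s : ℝ, ‖e s‖ = 1 := by
      intro s
      rw [he]
      simp only [Complex.norm_exp]
      have hre : (Complex.I * (d j) * s).re = 0 := by
        simp [Complex.mul_re]
      rw [hre, Real.exp_zero]
    set z : ℝ → ℂ := fun s => e s * coord H j s with hz
    have hz_deriv : ∀ s : ℝ, HasDerivAt z (e s * (-Complex.I) * nb j s) s := by
      intro s
      have h := (he_deriv s).mul (hderiv j hj s)
      refine h.congr_deriv ?_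
      ring
    have hz_cont : Continuous fun s => e s * (-Complex.I) * nb j s := by
      have hec : Continuous e := by
        apply Complex.continuous_exp.comp
        exact continuous_const.mul Complex.continuous_ofReal
      exact (hec.mul continuous_const).mul (hcont_nb_raw j)
    have hzFTC : z σ - z 0 = ∫ s in (0 : ℝ)..σ, e s * (-Complex.I) * nb j s := by
      rw [intervalIntegral.integral_eq_sub_of_hasDerivAt (fun s _ => hz_deriv s)
        (hz_cont.intervalIntegrable 0 σ)]
    have hz0 : z 0 = coord H j 0 := by
      simp [hz, he]
    have hznorm : ∀ s, ‖z s‖ = ‖coord H j s‖ := by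
      intro s
      rw [hz]
      simp only []
      rw [norm_mul, he_norm, one_mul]
    calc ‖coord H j σ‖ = ‖z σ‖ := (hznorm σ).symm
      _ = ‖z 0 + (z σ - z 0)‖ := by congr 1; ring
      _ ≤ ‖z 0‖ + ‖z σ - z 0‖ := norm_add_le _ _
      _ ≤ ‖coord H j 0‖ + ∫ s in (0 : ℝ)..σ, ‖nb j s‖ := by
          apply add_le_add
          · rw [hz0]
          · rw [hzFTC]
            calc ‖∫ s in (0 : ℝ)..σ, e s * (-Complex.I) * nb j s‖
                ≤ |∫ s in (0 : ℝ)..σ, ‖e s * (-Complex.I) * nb j s‖| :=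
                  intervalIntegral.norm_integral_le_abs_integral_norm
              _ = |∫ s in (0 : ℝ)..σ, ‖nb j s‖| := by
                  congr 1
                  apply intervalIntegral.integral_congr
                  intro s _
                  show ‖e s * -Complex.I * nb j s‖ = ‖nb j s‖
                  rw [norm_mul, norm_mul, he_norm]
                  simp
              _ = ∫ s in (0 : ℝ)..σ, ‖nb j s‖ := by
                  apply _root_.abs_of_nonneg
                  apply intervalIntegral.integral_nonneg hσ
                  intro s _
                  exact norm_nonneg _
  have main : ∀ k : ℕ, ∀ j, j < N → ∀ σ : ℝ, 0 ≤ σ →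
      ‖coord H j σ‖ ≤ gt' j σ + (2 * σ) ^ k / k.factorial := by
    intro k
    induction k with
    | zero =>
      intro j hj σ hσ
      have h1 := norm_coord_le_one hsym j σ
      have h2 := gt'_nonneg j hσ
      have h3 : (2 * σ) ^ (0 : ℕ) / ((Nat.factorial 0 : ℕ) : ℝ) = 1 := by norm_num
      rw [h3]
      linarith
    | succ k ih =>
      intro j hj σ hσ
      have hbound : ∀ s ∈ Set.Icc (0 : ℝ) σ,
          ‖nb j s‖ ≤ 2 * gt' (j - 1) s + 2 * ((2 * s) ^ k / k.factorial) := by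
        intro s hs
        have hs0 : (0 : ℝ) ≤ s := hs.1
        have htknn : (0 : ℝ) ≤ (2 * s) ^ k / (k.factorial : ℝ) := by positivity
        have hgnn : (0 : ℝ) ≤ gt' (j - 1) s := gt'_nonneg _ hs0
        have hterm1 : ‖(if j = 0 then (0 : ℂ) else coord H (j - 1) s)‖
            ≤ gt' (j - 1) s + (2 * s) ^ k / k.factorial := by
          by_cases h : j = 0
          · simp only [h, if_true, norm_zero]
            have : (0:ℝ) ≤ gt' ((0:ℕ) - 1) s := gt'_nonneg _ hs0
            simp only [h] at hgnn ⊢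
            linarith [htknn]
          · simp only [h, if_false]
            exact ih (j - 1) (by omega) s hs0
        have hterm2 : ‖(if j = N - 1 then (0 : ℂ) else coord H (j + 1) s)‖
            ≤ gt' (j - 1) s + (2 * s) ^ k / k.factorial := by
          by_cases h : j = N - 1
          · simp only [h, if_true, norm_zero]
            have : (0:ℝ) ≤ gt' (N - 1 - 1) s := gt'_nonneg _ hs0
            linarith [htknn, gt'_nonneg (j - 1) hs0]
          · simp only [h, if_false]
            have hj1 : j + 1 < N := by omega
            have h1 := ih (j + 1) hj1 s hs0
            have h2 : gt' (j + 1) s ≤ gt' (j - 1) s := by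
              rcases Nat.eq_zero_or_pos j with hj0 | hj0
              · subst hj0
                exact gt'_anti hs0
              · have hj' : j - 1 + 1 = j := by omega
                calc gt' (j + 1) s ≤ gt' j s := gt'_anti hs0
                  _ = gt' ((j - 1) + 1) s := by rw [hj']
                  _ ≤ gt' (j - 1) s := gt'_anti hs0
            linarith
        have htri : ‖nb j s‖ ≤ ‖(if j = 0 then (0 : ℂ) else coord H (j - 1) s)‖
            + ‖(if j = N - 1 then (0 : ℂ) else coord H (j + 1) s)‖ := norm_add_le _ _
        linarith
      have hint1 : (∫ s in (0 : ℝ)..σ, ‖nb j s‖)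
          ≤ ∫ s in (0 : ℝ)..σ, (2 * gt' (j - 1) s + 2 * ((2 * s) ^ k / k.factorial)) := by
        apply intervalIntegral.integral_mono_on hσ
        · exact (hcont_nb j).intervalIntegrable 0 σ
        · apply Continuous.intervalIntegrable
          exact (continuous_const.mul (continuous_gt' (j - 1))).add
            (continuous_const.mul (((continuous_const.mul continuous_id).pow k).div_const _))
        · exact hbound
      have hint2 : (∫ s in (0 : ℝ)..σ, (2 * gt' (j - 1) s + 2 * ((2 * s) ^ k / k.factorial)))
          = (gt' (j - 1 + 1) σ - gt' (j - 1 + 1) 0) + (2 * σ) ^ (k + 1) / (k + 1).factorial := by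
        rw [intervalIntegral.integral_add]
        · rw [integral_gt', integral_tk]
        · exact (continuous_const.mul (continuous_gt' (j - 1))).intervalIntegrable _ _
        · apply Continuous.intervalIntegrable
          exact continuous_const.mul (((continuous_const.mul continuous_id).pow k).div_const _)
      have hstep := hFTC j hj σ hσ
      have hc0 : ‖coord H j 0‖ = if j = 0 then 1 else 0 := by
        rw [coord_at_zero]
        split_ifs <;> simp
      rw [hc0] at hstep
      have hintall := hint1.trans (le_of_eq hint2)
      rcases Nat.eq_zero_or_pos j with hj0 | hj0
      · subst hj0
        simp only [if_true] at hstep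
        have hz1 : ((0:ℕ) - 1 + 1) = 1 := rfl
        rw [hz1] at hintall
        have hg10 : gt' 1 0 = 0 := gt'_zero (le_refl 1)
        have hg1 : gt' 1 σ = gt' 0 σ - 1 := by
          rw [gt'_succ]
          norm_num
        rw [hg10] at hintall
        calc ‖coord H 0 σ‖ ≤ 1 + ∫ s in (0 : ℝ)..σ, ‖nb 0 s‖ := by
              simpa using hstep
          _ ≤ 1 + ((gt' 1 σ - 0) + (2 * σ) ^ (k + 1) / (k + 1).factorial) := by linarith
          _ ≤ gt' 0 σ + (2 * σ) ^ (k + 1) / (k + 1).factorial := by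
              rw [hg1]; ring_nf; linarith
      · have hjne : j ≠ 0 := by omega
        simp only [hjne, if_false] at hstep
        have hj1 : j - 1 + 1 = j := by omega
        rw [hj1] at hintall
        have hg0 : gt' j 0 = 0 := gt'_zero (by omega)
        rw [hg0] at hintall
        calc ‖coord H j σ‖ ≤ 0 + ∫ s in (0 : ℝ)..σ, ‖nb j s‖ := by simpa using hstep
          _ ≤ gt' j σ + (2 * σ) ^ (k + 1) / (k + 1).factorial := by linarith
  intro j hj σ hσ
  have hten : Filter.Tendsto (fun k : ℕ => gt' j σ + (2 * σ) ^ k / k.factorial)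
      Filter.atTop (nhds (gt' j σ)) := by
    have h := FloorSemiring.tendsto_pow_div_factorial_atTop (2 * σ)
    have h2 := Filter.Tendsto.add (tendsto_const_nhds (x := gt' j σ)) h
    simpa using h2
  exact ge_of_tendsto' hten (fun k => main k j hj σ hσ)

/-! ### component formulas for the Hamiltonians -/

lemma ham_coord0 (Δ B : CL) (hΔ : IsDirichletLaplacian Δ) (hB : IsRankOneDelta B)
    (V : ℕ → ℝ) (MV : CL) (hMV : IsMulBy V MV) (lam : ℝ) (ψ : ℓ2) :
    ((Δ + (lam : ℂ) • B + MV) ψ) 0 = ψ 1 + (((lam : ℂ)) + (V 0 : ℂ)) * ψ 0 := by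
  rw [ContinuousLinearMap.add_apply, ContinuousLinearMap.add_apply,
    ContinuousLinearMap.smul_apply, lp.coeFn_add, Pi.add_apply, lp.coeFn_add, Pi.add_apply,
    lp.coeFn_smul, Pi.smul_apply, (hΔ ψ).1, hMV ψ 0, hB ψ, lp.coeFn_smul, Pi.smul_apply,
    inner_δ₁, δ₁_apply]
  simp only [if_true, smul_eq_mul, reduceIte]
  try ring

lemma ham_coordS (Δ B : CL) (hΔ : IsDirichletLaplacian Δ) (hB : IsRankOneDelta B)
    (V : ℕ → ℝ) (MV : CL) (hMV : IsMulBy V MV) (lam : ℝ) (ψ : ℓ2) (n : ℕ) :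
    ((Δ + (lam : ℂ) • B + MV) ψ) (n + 1) = ψ n + ψ (n + 2) + (V (n + 1) : ℂ) * ψ (n + 1) := by
  rw [ContinuousLinearMap.add_apply, ContinuousLinearMap.add_apply,
    ContinuousLinearMap.smul_apply, lp.coeFn_add, Pi.add_apply, lp.coeFn_add, Pi.add_apply,
    lp.coeFn_smul, Pi.smul_apply, (hΔ ψ).2 n, hMV ψ (n + 1), hB ψ, lp.coeFn_smul, Pi.smul_apply,
    inner_δ₁, δ₁_apply]
  have : n + 1 ≠ 0 := by omega
  simp only [this, if_false, smul_eq_mul, mul_zero, add_zero, smul_zero]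
  try ring

lemma hd_coord (Δ B : CL) (hΔ : IsDirichletLaplacian Δ) (hB : IsRankOneDelta B)
    (V : ℕ → ℝ) (MV : CL) (hMV : IsMulBy V MV) (lam : ℝ) (N : ℕ) (hN : 1 ≤ N)
    (ψ : ℓ2) (n : ℕ) (hn : n < N) :
    (((Δ + (lam : ℂ) • B + MV) - Gam N) ψ) n
      = (if n = 0 then 0 else ψ (n - 1)) + (if n = N - 1 then 0 else ψ (n + 1))
        + (((V n + if n = 0 then lam else 0 : ℝ)) : ℂ) * ψ n := by
  rw [ContinuousLinearMap.sub_apply, lp.coeFn_sub, Pi.sub_apply, Gam_coord]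
  rcases n with _ | m
  · rw [ham_coord0 Δ B hΔ hB V MV hMV lam ψ]
    by_cases hN1 : N = 1
    · subst hN1
      simp only [Nat.sub_self, if_pos rfl, if_neg (by omega : ¬ (0 : ℕ) = 1)]
      push_cast
      ring
    · have h1 : ¬ ((0 : ℕ) = N - 1) := by omega
      have h2 : ¬ ((0 : ℕ) = N) := by omega
      simp only [if_pos rfl, if_neg h1, if_neg h2]
      push_cast
      ring
  · rw [ham_coordS Δ B hΔ hB V MV hMV lam ψ m]
    have hm0 : ¬ (m + 1 = 0) := by omega
    have hmN : ¬ (m + 1 = N) := by omega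
    by_cases h2 : m + 1 = N - 1
    · have hN2 : N = m + 2 := by omega
      have hψ : ψ N = ψ (m + 2) := by rw [hN2]
      simp only [if_neg hm0, if_pos h2, if_neg hmN, hψ, Nat.add_sub_cancel]
      push_cast
      ring
    · simp only [if_neg hm0, if_neg h2, if_neg hmN, Nat.add_sub_cancel]
      push_cast
      ring

lemma hd_inv (Δ B : CL) (hΔ : IsDirichletLaplacian Δ) (hB : IsRankOneDelta B)
    (V : ℕ → ℝ) (MV : CL) (hMV : IsMulBy V MV) (lam : ℝ) (N : ℕ) (hN : 1 ≤ N)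
    (ψ : ℓ2) (hψ : ∀ n, N ≤ n → ψ n = 0) (n : ℕ) (hn : N ≤ n) :
    (((Δ + (lam : ℂ) • B + MV) - Gam N) ψ) n = 0 := by
  rw [ContinuousLinearMap.sub_apply, lp.coeFn_sub, Pi.sub_apply, Gam_coord]
  obtain ⟨m, rfl⟩ : ∃ m, n = m + 1 := ⟨n - 1, by omega⟩
  rw [ham_coordS Δ B hΔ hB V MV hMV lam ψ m]
  have h1 : ψ (m + 2) = 0 := hψ _ (by omega)
  have h2 : ψ (m + 1) = 0 := hψ _ (by omega)
  have h3 : ¬ (m + 1 = N - 1) := by omega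
  by_cases h4 : m + 1 = N
  · have h5 : ψ (N - 1) = ψ m := by rw [show N - 1 = m by omega]
    rw [h1, h2, if_neg h3, if_pos h4, h5]
    ring
  · have h6 : ψ m = 0 := hψ _ (by omega)
    rw [h1, h2, h6, if_neg h3, if_neg h4]
    ring

lemma hd_eqVW (Δ B : CL) (hΔ : IsDirichletLaplacian Δ) (hB : IsRankOneDelta B)
    (V W : ℕ → ℝ) (MV MW : CL) (hMV : IsMulBy V MV) (hMW : IsMulBy W MW)
    (lam : ℝ) (N : ℕ) (hN : 1 ≤ N) (hVW : ∀ n < N, V n = W n)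
    (ψ : ℓ2) (hψ : ∀ n, N ≤ n → ψ n = 0) :
    (((Δ + (lam : ℂ) • B + MV) - Gam N) ψ) = (((Δ + (lam : ℂ) • B + MW) - Gam N) ψ) := by
  apply lp.ext
  funext n
  by_cases hn : n < N
  · rw [hd_coord Δ B hΔ hB V MV hMV lam N hN ψ n hn,
      hd_coord Δ B hΔ hB W MW hMW lam N hN ψ n hn, hVW n hn]
  · rw [hd_inv Δ B hΔ hB V MV hMV lam N hN ψ hψ n (by omega),
      hd_inv Δ B hΔ hB W MW hMW lam N hN ψ hψ n (by omega)]

/-! ### the comparison lemma -/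

lemma compare (Δ B : CL) (hΔ : IsDirichletLaplacian Δ) (hB : IsRankOneDelta B)
    (V W : ℕ → ℝ) (MV MW : CL) (hMV : IsMulBy V MV) (hMW : IsMulBy W MW)
    (N : ℕ) (hN : 1 ≤ N) (hVW : ∀ n < N, V n = W n) (lam : ℝ) (t : ℝ) (ht0 : 0 ≤ t) :
    ‖(inner ℂ δ₁ (U (Δ + (lam : ℂ) • B + MV) t δ₁) : ℂ)
      - (inner ℂ δ₁ (U (Δ + (lam : ℂ) • B + MW) t δ₁) : ℂ)‖ ≤ gt' N t := by
  have hsymHV : SymOp (Δ + (lam : ℂ) • B + MV) :=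
    ((symop_laplacian hΔ).add ((symop_B hB).real_smul lam)).add (symop_mul hMV)
  have hsymHW : SymOp (Δ + (lam : ℂ) • B + MW) :=
    ((symop_laplacian hΔ).add ((symop_B hB).real_smul lam)).add (symop_mul hMW)
  have hsymHDV : SymOp ((Δ + (lam : ℂ) • B + MV) - Gam N) := hsymHV.sub (symop_Gam N)
  have hsymHDW : SymOp ((Δ + (lam : ℂ) • B + MW) - Gam N) := hsymHW.sub (symop_Gam N)
  have hinvV := fun ψ hψ n hn => hd_inv Δ B hΔ hB V MV hMV lam N hN ψ hψ n hn
  have hinvW := fun ψ hψ n hn => hd_inv Δ B hΔ hB W MW hMW lam N hN ψ hψ n hn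
  have hpropV := propagation _ hsymHDV N hN (fun n => V n + if n = 0 then lam else 0)
    (fun ψ n hn => hd_coord Δ B hΔ hB V MV hMV lam N hN ψ n hn) hinvV
  have hpropW := propagation _ hsymHDW N hN (fun n => W n + if n = 0 then lam else 0)
    (fun ψ n hn => hd_coord Δ B hΔ hB W MW hMW lam N hN ψ n hn) hinvW
  -- Duhamel bound (for a generic side)
  have hduh : ∀ (HH : CL), SymOp HH → SymOp (HH - Gam N) →
      (∀ ψ : ℓ2, (∀ n, N ≤ n → ψ n = 0) → ∀ n, N ≤ n → ((HH - Gam N) ψ) n = 0) →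
      (∀ j, j < N → ∀ s : ℝ, 0 ≤ s → ‖coord (HH - Gam N) j s‖ ≤ gt' j s) →
      ‖(inner ℂ δ₁ (U HH t δ₁) : ℂ) - (inner ℂ δ₁ (U (HH - Gam N) t δ₁) : ℂ)‖ ≤ gt' N t / 2 := by
    intro HH hsym hsymD hinvD hpropD
    have hb : ∀ s ∈ Set.Icc (0 : ℝ) t,
        ‖(HH - (HH - Gam N)) (U (HH - Gam N) s δ₁)‖ ≤ gt' (N - 1) s := by
      intro s hs
      have hsub : HH - (HH - Gam N) = Gam N := by abel
      rw [hsub]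
      have hψN : (U (HH - Gam N) s δ₁) N = 0 :=
        coord_zero_of_inv _ N hN hinvD s N (le_refl N)
      rw [Gam_apply, hψN, zero_smul, zero_add, norm_smul, norm_en, mul_one]
      exact hpropD (N - 1) (by omega) s hs.1
    have hd := duhamel HH (HH - Gam N) hsym δ₁ δ₁ t ht0 (gt' (N - 1))
      (continuous_gt' (N - 1)) hb
    rw [norm_δ₁, one_mul] at hd
    have hint : (∫ s in (0 : ℝ)..t, gt' (N - 1) s) = gt' N t / 2 := by
      have h1 := integral_gt' (N - 1) t
      have h2 : (N - 1 + 1) = N := by omega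
      rw [h2, gt'_zero hN, sub_zero] at h1
      have h3 : (∫ s in (0 : ℝ)..t, 2 * gt' (N - 1) s)
          = 2 * ∫ s in (0 : ℝ)..t, gt' (N - 1) s := by
        exact intervalIntegral.integral_const_mul 2 _
      rw [h3] at h1
      linarith
    rw [hint] at hd
    exact hd
  have hdV := hduh (Δ + (lam : ℂ) • B + MV) hsymHV hsymHDV hinvV hpropV
  have hdW := hduh (Δ + (lam : ℂ) • B + MW) hsymHW hsymHDW hinvW hpropW
  -- middle equality
  have hmid : U ((Δ + (lam : ℂ) • B + MV) - Gam N) t δ₁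
      = U ((Δ + (lam : ℂ) • B + MW) - Gam N) t δ₁ := by
    rw [U, U]
    apply exp_apply_congr _ _ N ?_ ?_ δ₁ (δ₁_supp N hN)
    · intro ψ hψ n hn
      have h0 : (((t : ℂ) • Agen ((Δ + (lam : ℂ) • B + MV) - Gam N)) ψ) n
          = (t : ℂ) * ((-Complex.I) * ((((Δ + (lam : ℂ) • B + MV) - Gam N) ψ) n)) := by
        rw [ContinuousLinearMap.smul_apply, lp.coeFn_smul, Pi.smul_apply, smul_eq_mul, Agen,
          ContinuousLinearMap.smul_apply, lp.coeFn_smul, Pi.smul_apply, smul_eq_mul]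
      rw [h0, hinvV ψ hψ n hn, mul_zero, mul_zero]
    · intro ψ hψ
      have h3 : (((Δ + (lam : ℂ) • B + MV) - Gam N) ψ)
          = (((Δ + (lam : ℂ) • B + MW) - Gam N) ψ) :=
        hd_eqVW Δ B hΔ hB V W MV MW hMV hMW lam N hN hVW ψ hψ
      calc ((t : ℂ) • Agen ((Δ + (lam : ℂ) • B + MV) - Gam N)) ψ
          = (t : ℂ) • ((-Complex.I) • ((((Δ + (lam : ℂ) • B + MV) - Gam N)) ψ)) := rfl
        _ = (t : ℂ) • ((-Complex.I) • ((((Δ + (lam : ℂ) • B + MW) - Gam N)) ψ)) := by rw [h3]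
        _ = ((t : ℂ) • Agen ((Δ + (lam : ℂ) • B + MW) - Gam N)) ψ := rfl
  have hmid' : (inner ℂ δ₁ (U ((Δ + (lam : ℂ) • B + MV) - Gam N) t δ₁) : ℂ)
      = (inner ℂ δ₁ (U ((Δ + (lam : ℂ) • B + MW) - Gam N) t δ₁) : ℂ) := by rw [hmid]
  calc ‖(inner ℂ δ₁ (U (Δ + (lam : ℂ) • B + MV) t δ₁) : ℂ)
        - (inner ℂ δ₁ (U (Δ + (lam : ℂ) • B + MW) t δ₁) : ℂ)‖
      = ‖((inner ℂ δ₁ (U (Δ + (lam : ℂ) • B + MV) t δ₁) : ℂ)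
          - (inner ℂ δ₁ (U ((Δ + (lam : ℂ) • B + MV) - Gam N) t δ₁) : ℂ))
        + ((inner ℂ δ₁ (U ((Δ + (lam : ℂ) • B + MW) - Gam N) t δ₁) : ℂ)
          - (inner ℂ δ₁ (U (Δ + (lam : ℂ) • B + MW) t δ₁) : ℂ))‖ := by
        rw [hmid']
        congr 1
        ring
    _ ≤ ‖(inner ℂ δ₁ (U (Δ + (lam : ℂ) • B + MV) t δ₁) : ℂ)
          - (inner ℂ δ₁ (U ((Δ + (lam : ℂ) • B + MV) - Gam N) t δ₁) : ℂ)‖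
        + ‖(inner ℂ δ₁ (U ((Δ + (lam : ℂ) • B + MW) - Gam N) t δ₁) : ℂ)
          - (inner ℂ δ₁ (U (Δ + (lam : ℂ) • B + MW) t δ₁) : ℂ)‖ := norm_add_le _ _
    _ ≤ gt' N t / 2 + gt' N t / 2 := by
        apply add_le_add hdV
        rw [norm_sub_rev]
        exact hdW
    _ = gt' N t := by ring

/-! ### tail comparison -/

lemma summable_tail (x : ℝ) (N : ℕ) :
    Summable (fun m : {m : ℕ // N ≤ m} => x ^ (m : ℕ) / (((m : ℕ).factorial : ℝ))) :=
  ((Real.summable_pow_div_factorial x).comp_injective Subtype.coe_injective).congr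
    (fun _ => rfl)

lemma gt'_le_tail (N : ℕ) (t T M : ℝ) (ht0 : 0 ≤ t) (htT : t ≤ T) (hM : 0 ≤ M) :
    gt' N t ≤ ∑' m : {m : ℕ // N ≤ m}, ((2 + M) * T) ^ (m : ℕ) / (((m : ℕ).factorial : ℝ)) := by
  have hT0 : 0 ≤ T := le_trans ht0 htT
  have hsum2t : Summable fun m : ℕ => (2 * t) ^ m / ((m.factorial : ℝ)) :=
    Real.summable_pow_div_factorial _
  have hexp : Real.exp (2 * t) = ∑' m : ℕ, (2 * t) ^ m / ((m.factorial : ℝ)) := by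
    rw [Real.exp_eq_exp_ℝ, exp_eq_tsum_div]
  have hsplit := hsum2t.sum_add_tsum_compl (s := Finset.range N)
  have hgt : gt' N t = ∑' m : ↥(((Finset.range N : Finset ℕ) : Set ℕ)ᶜ),
      (2 * t) ^ (m : ℕ) / (((m : ℕ).factorial : ℝ)) := by
    rw [gt', hexp, ← hsplit]
    ring
  have hre : gt' N t = ∑' m : {m : ℕ // N ≤ m}, (2 * t) ^ (m : ℕ) / (((m : ℕ).factorial : ℝ)) := by
    rw [hgt, ← Equiv.tsum_eq
      (Equiv.subtypeEquivRight (fun m => by simp [Finset.mem_range, not_lt] :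
        ∀ m : ℕ, N ≤ m ↔ m ∈ ((Finset.range N : Finset ℕ) : Set ℕ)ᶜ))
      (fun m : ↥(((Finset.range N : Finset ℕ) : Set ℕ)ᶜ) =>
      (2 * t) ^ (m : ℕ) / (((m : ℕ).factorial : ℝ)))]
    exact tsum_congr fun c => rfl
  rw [hre]
  apply Summable.tsum_le_tsum _ (summable_tail (2 * t) N) (summable_tail ((2 + M) * T) N)
  intro m
  have h2t : (0 : ℝ) ≤ 2 * t := by linarith
  have hle : 2 * t ≤ (2 + M) * T := by nlinarith
  gcongr

lemma tail_nonneg (N : ℕ) (x : ℝ) (hx : 0 ≤ x) :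
    0 ≤ ∑' m : {m : ℕ // N ≤ m}, x ^ (m : ℕ) / (((m : ℕ).factorial : ℝ)) :=
  tsum_nonneg (fun m => by positivity)

lemma tail_ge_one (x : ℝ) (hx : 0 ≤ x) :
    (1 : ℝ) ≤ ∑' m : {m : ℕ // (0 : ℕ) ≤ m}, x ^ (m : ℕ) / (((m : ℕ).factorial : ℝ)) := by
  have hs := summable_tail x 0
  have h := Summable.le_tsum hs ⟨0, le_refl 0⟩ (fun b _ => by positivity)
  simpa using h

end PF

/-- if `W` agrees with `V` on the first `N` sites, `t₁,…,t_k ∈ (0,T]`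
are times such that for each `|λ| ≤ M` some `|⟨δ₁, e^{-it_iH_{V,λ}}δ₁⟩| ≥ 1/2`, and
`2∑_{m≥N}((2+M)T)^m/m! < ε`, then for each `|λ| ≤ M` some
`|⟨δ₁, e^{-it_iH_{W,λ}}δ₁⟩| ≥ 1/2 − ε`. -/
theorem large_amplitudes_survive_prefix_freezing
    (Δ B : ℓ2 →L[ℂ] ℓ2) (hΔ : IsDirichletLaplacian Δ) (hB : IsRankOneDelta B)
    (V W : ℕ → ℝ) (hVbdd : ∃ C, ∀ n, |V n| ≤ C) (hWbdd : ∃ C, ∀ n, |W n| ≤ C)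
    (MV MW : ℓ2 →L[ℂ] ℓ2) (hMV : IsMulBy V MV) (hMW : IsMulBy W MW)
    (N : ℕ) (hVW : ∀ n < N, V n = W n)
    (M T : ℝ) (hM : 0 < M) (hT : 0 < T)
    (k : ℕ) (ts : Fin k → ℝ) (hts : ∀ i, ts i ∈ Set.Ioc (0 : ℝ) T)
    (hamp : ∀ lam : ℝ, |lam| ≤ M → ∃ i : Fin k,
      (1 : ℝ) / 2 ≤
        ‖(inner ℂ δ₁ (exp ((-(ts i : ℂ) * Complex.I) • (Δ + (lam : ℂ) • B + MV)) δ₁) : ℂ)‖)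
    (ε : ℝ)
    (htail : 2 * ∑' m : {m : ℕ // N ≤ m}, ((2 + M) * T) ^ (m : ℕ) / (m : ℕ).factorial < ε) :
    ∀ lam : ℝ, |lam| ≤ M → ∃ i : Fin k,
      (1 : ℝ) / 2 - ε ≤
        ‖(inner ℂ δ₁ (exp ((-(ts i : ℂ) * Complex.I) • (Δ + (lam : ℂ) • B + MW)) δ₁) : ℂ)‖ := by
  intro lam hlam
  obtain ⟨i, hi⟩ := hamp lam hlam
  refine ⟨i, ?_⟩
  have ht0 : 0 < ts i := (hts i).1
  have htT : ts i ≤ T := (hts i).2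
  have hxnn : (0 : ℝ) ≤ (2 + M) * T := by nlinarith
  have hSnn : 0 ≤ ∑' m : {m : ℕ // N ≤ m}, ((2 + M) * T) ^ (m : ℕ) / (((m : ℕ).factorial : ℝ)) :=
    PF.tail_nonneg N _ hxnn
  by_cases hN : 1 ≤ N
  · -- main case
    have hUV : exp ((-(ts i : ℂ) * Complex.I) • (Δ + (lam : ℂ) • B + MV))
        = PF.U (Δ + (lam : ℂ) • B + MV) (ts i) := by
      rw [PF.U, PF.Agen, smul_smul]
      have hs : (-(ts i : ℂ) * Complex.I) = ((ts i : ℂ) * -Complex.I) := by ring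
      rw [hs]
    have hUW : exp ((-(ts i : ℂ) * Complex.I) • (Δ + (lam : ℂ) • B + MW))
        = PF.U (Δ + (lam : ℂ) • B + MW) (ts i) := by
      rw [PF.U, PF.Agen, smul_smul]
      have hs : (-(ts i : ℂ) * Complex.I) = ((ts i : ℂ) * -Complex.I) := by ring
      rw [hs]
    rw [hUV] at hi
    rw [hUW]
    have hcmp := PF.compare Δ B hΔ hB V W MV MW hMV hMW N hN hVW lam (ts i) (le_of_lt ht0)
    have htail2 : PF.gt' N (ts i)
        ≤ ∑' m : {m : ℕ // N ≤ m}, ((2 + M) * T) ^ (m : ℕ) / (((m : ℕ).factorial : ℝ)) :=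
      PF.gt'_le_tail N (ts i) T M (le_of_lt ht0) htT (le_of_lt hM)
    have htri := norm_sub_norm_le
      (inner ℂ δ₁ (PF.U (Δ + (lam : ℂ) • B + MV) (ts i) δ₁) : ℂ)
      (inner ℂ δ₁ (PF.U (Δ + (lam : ℂ) • B + MW) (ts i) δ₁) : ℂ)
    linarith
  · -- trivial case N = 0
    have hN0 : N = 0 := by omega
    subst hN0
    have h1 : (1 : ℝ) ≤ ∑' m : {m : ℕ // (0 : ℕ) ≤ m},
        ((2 + M) * T) ^ (m : ℕ) / (((m : ℕ).factorial : ℝ)) :=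
      PF.tail_ge_one _ hxnn
    have : (1 : ℝ) / 2 - ε ≤ 0 := by linarith
    exact this.trans (norm_nonneg _)

end
end
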